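/- arXiv:1302.6021 — 2 statements merged into one kernel-verified Lean document; each statement's English description precedes it below -/
import Mathlib

section
/- Let k ≥ 1 and define c(k) = 1/2 + (k/√(4k²-1))·coth((k/2)·√((2k+1)/(2k-1))). Then 1/c(k) = 1 - 1/(16k²) + O(1/k⁴) as k → ∞; in particular there exists a constant C such that |1/c(k) - 1 + 1/(16k²)| ≤ C/k⁴ for all k ≥ 1. -/
/-- `c(k) = 1/2 + (k/√(4k²-1))·coth((k/2)·√((2k+1)/(2k-1)))`. -/
noncomputable def propBound (k : ℕ) : ℝ :=
  1 / 2 + (k : ℝ) / Real.sqrt (4 * (k : ℝ) ^ 2 - 1) *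
    (Real.cosh ((k : ℝ) / 2 * Real.sqrt ((2 * (k : ℝ) + 1) / (2 * (k : ℝ) - 1))) /
     Real.sinh ((k : ℝ) / 2 * Real.sqrt ((2 * (k : ℝ) + 1) / (2 * (k : ℝ) - 1))))

set_option maxHeartbeats 2000000 in
lemma stmt7_main (K : ℝ) (hK : 1 ≤ K) :
    |1 / (1 / 2 + K / Real.sqrt (4 * K ^ 2 - 1) *
      (Real.cosh (K / 2 * Real.sqrt ((2 * K + 1) / (2 * K - 1))) /
       Real.sinh (K / 2 * Real.sqrt ((2 * K + 1) / (2 * K - 1))))) - 1 + 1 / (16 * K ^ 2)|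
      ≤ 2000 / K ^ 4 := by
  have hK0 : (0 : ℝ) < K := by linarith
  set q : ℝ := (2 * K + 1) / (2 * K - 1) with hq
  set r : ℝ := Real.sqrt q with hr
  set x : ℝ := K / 2 * r with hxdef
  set s : ℝ := Real.sqrt (4 * K ^ 2 - 1) with hsdef
  have hden : (0 : ℝ) < 2 * K - 1 := by linarith
  have hq1 : (1 : ℝ) ≤ q := by
    rw [hq, le_div_iff₀ hden]; linarith
  have hr1 : (1 : ℝ) ≤ r := Real.one_le_sqrt.mpr hq1
  have hx : K / 2 ≤ x := by
    rw [hxdef]; nlinarith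
  have hx0 : 0 < x := by linarith
  have hsinh : 0 < Real.sinh x := Real.sinh_pos_iff.mpr hx0
  clear_value x r q
  have hs0 : 0 < s := Real.sqrt_pos.mpr (by nlinarith)
  -- bounds on s = √(4K²-1)
  have hslow0 : (0:ℝ) < 2 * K - 1 / (4 * K) - 1 / (16 * K ^ 3) := by
    have h1 : 1 / (4 * K) ≤ 1 / 4 := by
      rw [div_le_div_iff₀ (by positivity) (by norm_num)]; nlinarith
    have h2 : 1 / (16 * K ^ 3) ≤ 1 / 16 := by
      rw [div_le_div_iff₀ (by positivity) (by norm_num)]; nlinarith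
    linarith
  have hsup0 : (0:ℝ) ≤ 2 * K - 1 / (4 * K) := by
    have hpos : (0:ℝ) < 1 / (16 * K ^ 3) := by positivity
    linarith
  have hs_up : s ≤ 2 * K - 1 / (4 * K) := by
    have h : 4 * K ^ 2 - 1 ≤ (2 * K - 1 / (4 * K)) ^ 2 := by
      field_simp
      nlinarith [pow_pos hK0 2]
    calc s ≤ Real.sqrt ((2 * K - 1 / (4 * K)) ^ 2) := Real.sqrt_le_sqrt h
    _ = 2 * K - 1 / (4 * K) := Real.sqrt_sq hsup0
  have hs_low : 2 * K - 1 / (4 * K) - 1 / (16 * K ^ 3) ≤ s := by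
    rw [hsdef, Real.le_sqrt hslow0.le (by nlinarith)]
    have hp26 : K ^ 2 ≤ K ^ 6 := by nlinarith [pow_pos hK0 2, pow_pos hK0 4, sq_nonneg (K^2-1), sq_nonneg (K^2+1)]
    have hp46 : K ^ 4 ≤ K ^ 6 := by nlinarith [pow_pos hK0 4, sq_nonneg K]
    field_simp
    nlinarith [pow_pos hK0 2, pow_pos hK0 4, pow_pos hK0 6, pow_pos hK0 8, hp26, hp46]
  clear_value s
  -- coth bounds
  set cth : ℝ := Real.cosh x / Real.sinh x with hcth
  have hcth1 : 1 ≤ cth := by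
    rw [hcth, le_div_iff₀ hsinh, one_mul]
    nlinarith [Real.cosh_eq x, Real.sinh_eq x, Real.exp_pos (-x)]
  have hexpK : Real.exp (-K) ≤ 256 / K ^ 4 := by
    have h1 : K / 4 ≤ Real.exp (K / 4) := by
      nlinarith [Real.add_one_le_exp (K / 4)]
    have h2 : (K / 4) ^ 4 ≤ Real.exp (K / 4) ^ 4 :=
      pow_le_pow_left₀ (by linarith) h1 4
    have h3 : Real.exp (K / 4) ^ 4 = Real.exp K := by
      rw [← Real.exp_nat_mul]; congr 1 <;> try (push_cast; ring)
    rw [Real.exp_neg, inv_eq_one_div, div_le_div_iff₀ (Real.exp_pos K) (by positivity)]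
    nlinarith [h2, h3]
  have hcth2 : cth ≤ 1 + 4 * Real.exp (-K) := by
    have he2 : Real.exp (-(2 * x)) = (Real.exp x ^ 2)⁻¹ := by
      rw [Real.exp_neg]; congr 1
      rw [← Real.exp_nat_mul]; congr 1 <;> try (push_cast; ring)
    have hu0 : 0 < Real.exp x := Real.exp_pos x
    have hu2 : (2:ℝ) ≤ Real.exp x ^ 2 := by
      have h1 : Real.exp 1 ≤ Real.exp (2 * x) := Real.exp_le_exp.mpr (by linarith)
      have h2 : Real.exp (2 * x) = Real.exp x ^ 2 := by
        rw [← Real.exp_nat_mul]; congr 1 <;> try (push_cast; ring)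
      have h3 := Real.add_one_le_exp (1:ℝ)
      rw [h2] at h1
      linarith
    have hstep : cth ≤ 1 + 4 * Real.exp (-(2 * x)) := by
      rw [hcth, div_le_iff₀ hsinh, Real.cosh_eq, Real.sinh_eq, Real.exp_neg, he2]
      have h1 : (0:ℝ) < Real.exp x ^ 2 := by positivity
      rw [inv_eq_one_div, inv_eq_one_div]
      have key : (Real.exp x + 1 / Real.exp x) * (2 * Real.exp x ^ 2)
          ≤ ((1 + 4 * (1 / Real.exp x ^ 2)) * ((Real.exp x - 1 / Real.exp x) / 2)) * (2 * (2 * Real.exp x ^ 2)) := by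
        have e1 : (Real.exp x + 1 / Real.exp x) * (2 * Real.exp x ^ 2)
            = 2 * Real.exp x ^ 3 + 2 * Real.exp x := by
          field_simp
        have e2 : ((1 + 4 * (1 / Real.exp x ^ 2)) * ((Real.exp x - 1 / Real.exp x) / 2)) * (2 * (2 * Real.exp x ^ 2))
            = 2 * Real.exp x ^ 3 + 6 * Real.exp x - 8 / Real.exp x := by
          field_simp; ring
        rw [e1, e2]
        have h8 : 8 / Real.exp x ≤ 4 * Real.exp x := by
          rw [div_le_iff₀ hu0]; nlinarith
        linarith
      nlinarith [key, h1]
    have hmono : Real.exp (-(2 * x)) ≤ Real.exp (-K) :=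
      Real.exp_le_exp.mpr (by linarith)
    linarith
  clear_value cth
  -- t bounds
  set t : ℝ := K / s with ht
  have ht_low : 1 / 2 + 1 / (16 * K ^ 2) ≤ t := by
    rw [ht, le_div_iff₀ hs0]
    have hb0 : (0:ℝ) ≤ 1 / 2 + 1 / (16 * K ^ 2) := by positivity
    have h1 : (1 / 2 + 1 / (16 * K ^ 2)) * s ≤ (1 / 2 + 1 / (16 * K ^ 2)) * (2 * K - 1 / (4 * K)) :=
      mul_le_mul_of_nonneg_left hs_up hb0
    have h2 : (1 / 2 + 1 / (16 * K ^ 2)) * (2 * K - 1 / (4 * K)) ≤ K := by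
      field_simp
      nlinarith [pow_pos hK0 2, pow_pos hK0 3]
    linarith
  have ht_up : t ≤ 1 / 2 + 1 / (16 * K ^ 2) + 1 / (32 * K ^ 4) := by
    rw [ht, div_le_iff₀ hs0]
    have hb0 : (0:ℝ) ≤ 1 / 2 + 1 / (16 * K ^ 2) + 1 / (32 * K ^ 4) := by positivity
    have h1 : (1 / 2 + 1 / (16 * K ^ 2) + 1 / (32 * K ^ 4)) * (2 * K - 1 / (4 * K) - 1 / (16 * K ^ 3))
        ≤ (1 / 2 + 1 / (16 * K ^ 2) + 1 / (32 * K ^ 4)) * s :=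
      mul_le_mul_of_nonneg_left hs_low hb0
    have h2 : K ≤ (1 / 2 + 1 / (16 * K ^ 2) + 1 / (32 * K ^ 4)) * (2 * K - 1 / (4 * K) - 1 / (16 * K ^ 3)) := by
      have hK2 : (1:ℝ) ≤ K ^ 2 := by nlinarith
      have hp57 : K ^ 5 ≤ K ^ 7 := by nlinarith [pow_pos hK0 5]
      have hp37 : K ^ 3 ≤ K ^ 7 := by nlinarith [pow_pos hK0 3, pow_pos hK0 5]
      field_simp
      nlinarith [pow_pos hK0 2, pow_pos hK0 4, pow_pos hK0 6, pow_pos hK0 8, hp57, hp37]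
    linarith
  have ht0 : 0 < t := by rw [ht]; positivity
  -- c bounds
  set c : ℝ := 1 / 2 + t * cth with hc
  have hc_low : 1 + 1 / (16 * K ^ 2) ≤ c := by
    have h1 : t ≤ t * cth := by nlinarith
    rw [hc]; linarith
  have hc_up : c ≤ 1 + 1 / (16 * K ^ 2) + 2000 / K ^ 4 := by
    have ht1 : t ≤ 1 := by
      have hK2 : (1:ℝ) ≤ K ^ 2 := by nlinarith
      have hK4 : (1:ℝ) ≤ K ^ 4 := by nlinarith [sq_nonneg (K ^ 2 - 1)]
      have h16 : 1 / (16 * K ^ 2) ≤ 1 / 16 :=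
        one_div_le_one_div_of_le (by norm_num) (by nlinarith)
      have h32 : 1 / (32 * K ^ 4) ≤ 1 / 32 :=
        one_div_le_one_div_of_le (by norm_num) (by nlinarith)
      linarith
    have hE0 : 0 ≤ Real.exp (-K) := (Real.exp_pos _).le
    have h1 : t * cth ≤ t * (1 + 4 * Real.exp (-K)) := by nlinarith
    have h2 : t * (1 + 4 * Real.exp (-K)) ≤ t + 4 * Real.exp (-K) := by nlinarith
    have h3 : 4 * Real.exp (-K) ≤ 1024 / K ^ 4 := by
      calc 4 * Real.exp (-K) ≤ 4 * (256 / K ^ 4) := by linarith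
      _ = 1024 / K ^ 4 := by ring
    have h4 : 1 / (32 * K ^ 4) ≤ 1 / K ^ 4 :=
      one_div_le_one_div_of_le (by positivity) (by nlinarith [pow_pos hK0 4])
    have h5 : (1024 : ℝ) / K ^ 4 + 1 / K ^ 4 ≤ 2000 / K ^ 4 := by
      rw [← add_div]
      gcongr <;> norm_num
    rw [hc]; linarith
  -- conclude
  set a : ℝ := 1 / (16 * K ^ 2) with ha
  set d : ℝ := 2000 / K ^ 4 with hd
  have ha0 : 0 < a := by rw [ha]; positivity
  have hd0 : 0 < d := by rw [hd]; positivity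
  have ha16 : a ≤ 1 / 16 := by
    rw [ha, div_le_div_iff₀ (by positivity) (by norm_num)]; nlinarith
  have hc0 : 0 < c := by linarith
  have hinv_up : 1 / c ≤ 1 - a + a ^ 2 := by
    rw [div_le_iff₀ hc0]
    nlinarith [sq_nonneg a, mul_pos ha0 ha0]
  have hinv_low : 1 - a - d ≤ 1 / c := by
    rw [le_div_iff₀ hc0]
    rcases le_or_gt (1 - a - d) 0 with h | h
    · nlinarith
    · nlinarith [sq_nonneg (a + d)]
  have ha2d : a ^ 2 ≤ d := by
    rw [ha, hd, div_pow, div_le_div_iff₀ (by positivity) (by positivity)]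
    nlinarith [pow_pos hK0 2, pow_pos hK0 4, pow_pos hK0 8]
  rw [abs_le]
  constructor <;> linarith

/-- `1/c(k) = 1 - 1/(16k²) + O(1/k⁴)`: there is a constant `C` such that
`|1/c(k) - 1 + 1/(16k²)| ≤ C/k⁴` for all `k ≥ 1`. -/
theorem stmt_7 : ∃ C : ℝ, ∀ k : ℕ, 1 ≤ k →
    |1 / propBound k - 1 + 1 / (16 * (k : ℝ) ^ 2)| ≤ C / (k : ℝ) ^ 4 := by
  refine ⟨2000, fun k hk => ?_⟩
  have hK : (1 : ℝ) ≤ (k : ℝ) := by exact_mod_cast hk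
  unfold propBound
  exact stmt7_main (k : ℝ) hK
end

section
/- Let P : ℝ → ℝ be continuously differentiable on [0,1] with P(0) = 0 and P(1) = 1, and let k ≥ 1. Then the quantity F(P) = 2/(2k+1)·∫₀¹ P'(x)² dx + 1/2 + k²/(2(2k-1))·∫₀¹ P(x)² dx satisfies F(P) ≥ 1/2 + (k/√(4k²-1))·coth((k/2)·√((2k+1)/(2k-1))). -/
open Real Set intervalIntegral

/-- Key variational inequality: for positive `a`, `b` and `P` continuously differentiable
on `[0,1]` with `P 0 = 0`, `P 1 = 1`,
`√(ab)·coth(√(b/a)) ≤ a·∫ P'² + b·∫ P²`. -/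
lemma key_var_ineq (a b : ℝ) (ha : 0 < a) (hb : 0 < b)
    (P : ℝ → ℝ) (hP : ContDiffOn ℝ 1 P (Set.Icc 0 1))
    (h0 : P 0 = 0) (h1 : P 1 = 1) :
    Real.sqrt (a * b) * (Real.cosh (Real.sqrt (b / a)) / Real.sinh (Real.sqrt (b / a)))
      ≤ a * (∫ x in (0:ℝ)..1, (derivWithin P (Set.Icc 0 1) x) ^ 2)
        + b * (∫ x in (0:ℝ)..1, (P x) ^ 2) := by
  set φ : ℝ → ℝ := derivWithin P (Set.Icc 0 1) with hφ
  have hUD : UniqueDiffOn ℝ (Set.Icc (0:ℝ) 1) := uniqueDiffOn_Icc (by norm_num)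
  have hφc : ContinuousOn φ (Set.Icc 0 1) :=
    hP.continuousOn_derivWithin hUD le_rfl
  have hPc : ContinuousOn P (Set.Icc 0 1) := hP.continuousOn
  have hPd : ∀ x ∈ Set.Icc (0:ℝ) 1, HasDerivWithinAt P (φ x) (Set.Icc 0 1) x := by
    intro x hx
    exact ((hP.differentiableOn one_ne_zero x hx).hasDerivWithinAt)
  set c : ℝ := Real.sqrt (b / a) with hc
  have hcpos : 0 < c := Real.sqrt_pos.mpr (by positivity)
  have hab : 0 ≤ a * b := by positivity
  have hsab : Real.sqrt (a * b) * c = b := by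
    rw [hc, ← Real.sqrt_mul hab]
    rw [show a * b * (b / a) = b ^ 2 by field_simp]
    exact Real.sqrt_sq hb.le
  have hsplit : Real.sqrt (a * b) = Real.sqrt a * Real.sqrt b := Real.sqrt_mul ha.le b
  -- integrability of the right-hand side
  have hI1 : IntervalIntegrable (fun x => φ x ^ 2) MeasureTheory.volume 0 1 := by
    apply ContinuousOn.intervalIntegrable
    rw [Set.uIcc_of_le (by norm_num : (0:ℝ) ≤ 1)]
    exact hφc.pow 2
  have hI2 : IntervalIntegrable (fun x => P x ^ 2) MeasureTheory.volume 0 1 := by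
    apply ContinuousOn.intervalIntegrable
    rw [Set.uIcc_of_le (by norm_num : (0:ℝ) ≤ 1)]
    exact hPc.pow 2
  -- step: bound for every ε > 0 with shifted coth
  have step : ∀ ε : ℝ, 0 < ε →
      Real.sqrt (a * b) * (Real.cosh (c + ε) / Real.sinh (c + ε))
        ≤ a * (∫ x in (0:ℝ)..1, φ x ^ 2) + b * (∫ x in (0:ℝ)..1, (P x) ^ 2) := by
    intro ε hε
    set t : ℝ → ℝ := fun x => Real.cosh (c * x + ε) / Real.sinh (c * x + ε) with ht
    have hupos : ∀ x ∈ Set.Icc (0:ℝ) 1, 0 < c * x + ε := by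
      intro x hx
      have := hx.1
      nlinarith [hcpos]
    have hsinh : ∀ x ∈ Set.Icc (0:ℝ) 1, 0 < Real.sinh (c * x + ε) := by
      intro x hx; exact Real.sinh_pos_iff.mpr (hupos x hx)
    set G : ℝ → ℝ := fun x => Real.sqrt (a * b) * t x * P x ^ 2 with hG
    set F : ℝ → ℝ := fun x =>
      Real.sqrt (a * b) * (c * (1 - t x ^ 2)) * P x ^ 2
        + Real.sqrt (a * b) * t x * (2 * P x * φ x) with hF
    -- t is continuous on Icc
    have htc : ContinuousOn t (Set.Icc 0 1) := by
      apply ContinuousOn.div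
      · exact (Real.continuous_cosh.comp ((continuous_const.mul continuous_id).add
          continuous_const)).continuousOn
      · exact (Real.continuous_sinh.comp ((continuous_const.mul continuous_id).add
          continuous_const)).continuousOn
      · intro x hx; exact (hsinh x hx).ne'
    have hGc : ContinuousOn G (Set.Icc 0 1) :=
      ((continuousOn_const.mul htc).mul (hPc.pow 2))
    have hFc : ContinuousOn F (Set.Icc 0 1) := by
      apply ContinuousOn.add
      · exact (continuousOn_const.mul ((continuousOn_const.mul
          ((continuousOn_const.sub (htc.pow 2))))) ).mul (hPc.pow 2)
      · exact (continuousOn_const.mul htc).mul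
          ((continuousOn_const.mul hPc).mul hφc)
    have hFi : IntervalIntegrable F MeasureTheory.volume 0 1 := by
      apply ContinuousOn.intervalIntegrable
      rw [Set.uIcc_of_le (by norm_num : (0:ℝ) ≤ 1)]
      exact hFc
    -- derivative of G on the interior
    have hGd : ∀ x ∈ Set.Ioo (0:ℝ) 1, HasDerivAt G (F x) x := by
      intro x hx
      have hxI : x ∈ Set.Icc (0:ℝ) 1 := Set.mem_Icc.mpr ⟨hx.1.le, hx.2.le⟩
      have hmem : Set.Icc (0:ℝ) 1 ∈ nhds x := Icc_mem_nhds hx.1 hx.2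
      have hPdx : HasDerivAt P (φ x) x := (hPd x hxI).hasDerivAt hmem
      have hu : HasDerivAt (fun y : ℝ => c * y + ε) c x := by
        simpa using ((hasDerivAt_id x).const_mul c).add_const ε
      have hch : HasDerivAt (fun y => Real.cosh (c * y + ε))
          (Real.sinh (c * x + ε) * c) x := (Real.hasDerivAt_cosh _).comp x hu
      have hsh : HasDerivAt (fun y => Real.sinh (c * y + ε))
          (Real.cosh (c * x + ε) * c) x := (Real.hasDerivAt_sinh _).comp x hu
      have hsne : Real.sinh (c * x + ε) ≠ 0 := (hsinh x hxI).ne'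
      have htd : HasDerivAt t (c * (1 - t x ^ 2)) x := by
        have := hch.fun_div hsh hsne
        refine this.congr_deriv ?_
        have hid : Real.cosh (c * x + ε) ^ 2 - Real.sinh (c * x + ε) ^ 2 = 1 :=
          Real.cosh_sq_sub_sinh_sq _
        simp only [ht]
        field_simp
        try ring
      have hP2 : HasDerivAt (fun y => P y ^ 2) (2 * P x * φ x) x := by
        have := hPdx.fun_pow 2
        simpa [mul_comm, mul_assoc] using this
      have := ((htd.const_mul (Real.sqrt (a * b))).fun_mul hP2)
      convert this using 1
      try simp only [hF]
      try ring
    -- FTC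
    have hFTC : (∫ x in (0:ℝ)..1, F x) = G 1 - G 0 :=
      intervalIntegral.integral_eq_sub_of_hasDerivAt_of_le (by norm_num) hGc hGd hFi
    have hG1 : G 1 = Real.sqrt (a * b) * (Real.cosh (c + ε) / Real.sinh (c + ε)) := by
      simp [hG, ht, h1]
    have hG0 : G 0 = 0 := by simp [hG, h0]
    -- pointwise inequality F ≤ a φ² + b P²
    have hpt : ∀ x ∈ Set.Icc (0:ℝ) 1, F x ≤ a * φ x ^ 2 + b * P x ^ 2 := by
      intro x hx
      have h1' : Real.sqrt (a * b) * c = b := hsab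
      have h2 : Real.sqrt a ^ 2 = a := Real.sq_sqrt ha.le
      have h3 : Real.sqrt b ^ 2 = b := Real.sq_sqrt hb.le
      have hs : Real.sqrt (a * b) = Real.sqrt a * Real.sqrt b := hsplit
      have key := sq_nonneg (Real.sqrt a * φ x - Real.sqrt b * t x * P x)
      have e : Real.sqrt (a * b) * (c * (1 - t x ^ 2)) = b * (1 - t x ^ 2) := by
        rw [show Real.sqrt (a * b) * (c * (1 - t x ^ 2))
            = Real.sqrt (a * b) * c * (1 - t x ^ 2) from by ring, h1']
      simp only [hF]
      rw [e, hs]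
      have e2 : a * φ x ^ 2 + b * P x ^ 2
          - (b * (1 - t x ^ 2) * P x ^ 2
            + Real.sqrt a * Real.sqrt b * t x * (2 * P x * φ x))
          = (Real.sqrt a * φ x - Real.sqrt b * t x * P x) ^ 2 := by
        linear_combination (-(φ x ^ 2)) * h2 - (t x ^ 2 * P x ^ 2) * h3
      linarith [key, e2]
    have hmono : (∫ x in (0:ℝ)..1, F x)
        ≤ ∫ x in (0:ℝ)..1, (a * φ x ^ 2 + b * P x ^ 2) := by
      apply intervalIntegral.integral_mono_on (by norm_num) hFi
      · exact (hI1.const_mul a).add (hI2.const_mul b)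
      · exact hpt
    have hsplitint : (∫ x in (0:ℝ)..1, (a * φ x ^ 2 + b * P x ^ 2))
        = a * (∫ x in (0:ℝ)..1, φ x ^ 2) + b * (∫ x in (0:ℝ)..1, (P x) ^ 2) := by
      rw [intervalIntegral.integral_add (hI1.const_mul a) (hI2.const_mul b),
        intervalIntegral.integral_const_mul, intervalIntegral.integral_const_mul]
    calc Real.sqrt (a * b) * (Real.cosh (c + ε) / Real.sinh (c + ε))
        = G 1 - G 0 := by rw [hG1, hG0]; ring
      _ = ∫ x in (0:ℝ)..1, F x := hFTC.symm
      _ ≤ ∫ x in (0:ℝ)..1, (a * φ x ^ 2 + b * P x ^ 2) := hmono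
      _ = _ := hsplitint
  -- take the limit ε → 0⁺
  have hsc : Real.sinh c ≠ 0 := (Real.sinh_pos_iff.mpr hcpos).ne'
  have htend : Filter.Tendsto
      (fun ε : ℝ => Real.sqrt (a * b) * (Real.cosh (c + ε) / Real.sinh (c + ε)))
      (nhdsWithin 0 (Set.Ioi 0))
      (nhds (Real.sqrt (a * b) * (Real.cosh c / Real.sinh c))) := by
    have h1' : Filter.Tendsto (fun ε : ℝ => c + ε) (nhdsWithin 0 (Set.Ioi 0)) (nhds c) := by
      have : Filter.Tendsto (fun ε : ℝ => c + ε) (nhds 0) (nhds (c + 0)) :=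
        (continuous_const.add continuous_id).tendsto 0
      simpa using this.mono_left nhdsWithin_le_nhds
    have hcont : Filter.Tendsto
        (fun y : ℝ => Real.sqrt (a * b) * (Real.cosh y / Real.sinh y)) (nhds c)
        (nhds (Real.sqrt (a * b) * (Real.cosh c / Real.sinh c))) := by
      exact (Filter.Tendsto.const_mul _ ((Real.continuous_cosh.tendsto c).div
        (Real.continuous_sinh.tendsto c) hsc))
    exact hcont.comp h1'
  exact le_of_tendsto htend (Filter.eventually_iff_exists_mem.mpr
    ⟨Set.Ioi 0, self_mem_nhdsWithin, fun ε hε => step ε hε⟩)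

/-- Calculus-of-variations lower bound: for `P` continuously differentiable on `[0,1]` with
`P(0) = 0`, `P(1) = 1` and `k ≥ 1`,
`2/(2k+1)·∫₀¹ P'² + 1/2 + k²/(2(2k-1))·∫₀¹ P² ≥ 1/2 + (k/√(4k²-1))·coth((k/2)·√((2k+1)/(2k-1)))`. -/
theorem stmt_9 (P : ℝ → ℝ) (hP : ContDiffOn ℝ 1 P (Set.Icc 0 1))
    (h0 : P 0 = 0) (h1 : P 1 = 1) (k : ℕ) (hk : 1 ≤ k) :
    1 / 2 + (k : ℝ) / Real.sqrt (4 * (k : ℝ) ^ 2 - 1) *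
        (Real.cosh ((k : ℝ) / 2 * Real.sqrt ((2 * (k : ℝ) + 1) / (2 * (k : ℝ) - 1))) /
         Real.sinh ((k : ℝ) / 2 * Real.sqrt ((2 * (k : ℝ) + 1) / (2 * (k : ℝ) - 1))))
      ≤ 2 / (2 * (k : ℝ) + 1) * (∫ x in (0:ℝ)..1, (derivWithin P (Set.Icc 0 1) x) ^ 2)
          + 1 / 2
          + (k : ℝ) ^ 2 / (2 * (2 * (k : ℝ) - 1)) * (∫ x in (0:ℝ)..1, (P x) ^ 2) := by
  have hk1 : (1:ℝ) ≤ (k:ℝ) := by exact_mod_cast hk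
  set kr : ℝ := (k : ℝ) with hkr
  have h2k1 : (0:ℝ) < 2 * kr + 1 := by nlinarith
  have h2km1 : (0:ℝ) < 2 * kr - 1 := by nlinarith
  set a : ℝ := 2 / (2 * kr + 1) with ha'
  set b : ℝ := kr ^ 2 / (2 * (2 * kr - 1)) with hb'
  have ha : 0 < a := by positivity
  have hb : 0 < b := by positivity
  have h4 : (0:ℝ) < 4 * kr ^ 2 - 1 := by nlinarith
  have key := key_var_ineq a b ha hb P hP h0 h1
  have e1 : Real.sqrt (a * b) = kr / Real.sqrt (4 * kr ^ 2 - 1) := by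
    rw [show a * b = kr ^ 2 / (4 * kr ^ 2 - 1) by
      rw [ha', hb']
      rw [div_mul_div_comm, div_eq_div_iff (by positivity) h4.ne']
      ring]
    rw [Real.sqrt_div (sq_nonneg kr), Real.sqrt_sq (by linarith)]
  have e2 : Real.sqrt (b / a) = kr / 2 * Real.sqrt ((2 * kr + 1) / (2 * kr - 1)) := by
    rw [show b / a = (kr / 2) ^ 2 * ((2 * kr + 1) / (2 * kr - 1)) by
      rw [ha', hb']
      field_simp [h2k1.ne', h2km1.ne']
      try simp]
    rw [Real.sqrt_mul (sq_nonneg _), Real.sqrt_sq (by linarith)]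
  rw [e1, e2] at key
  linarith
end
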